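/- For all natural numbers m, Ch_m = ∑_{n=0}^{m} (-1)^{m-n} · (m!/n!) · Ĉh_n, where Ch_m and Ĉh_n are the first- and second-kind Changhee numbers of order 1. -/
import Mathlib


open Finset

/-- Changhee numbers of the first kind (order 1). -/
def Ch1 (n : ℕ) : ℚ := (-1)^n * n.factorial / 2^n

/-- Changhee numbers of the second kind (order 1). -/
def Chh1 (n : ℕ) : ℚ :=
  (n.factorial : ℚ) * ∑ i ∈ range (n + 1), ((-1 : ℚ))^i / 2^i * (Nat.choose 1 (n - i))

lemma Chh1_succ (n : ℕ) : Chh1 (n+1) = (-1)^n * ((n+1).factorial : ℚ) / 2^(n+1) := by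
  have hz : ∑ i ∈ range n, ((-1 : ℚ))^i / 2^i * (Nat.choose 1 (n + 1 - i)) = 0 := by
    apply Finset.sum_eq_zero
    intro i hi
    simp only [mem_range] at hi
    have : Nat.choose 1 (n + 1 - i) = 0 := by
      apply Nat.choose_eq_zero_of_lt
      omega
    simp [this]
  rw [Chh1, Finset.sum_range_succ, Finset.sum_range_succ, hz]
  simp
  ring

theorem first_from_second_order_one (m : ℕ) :
    Ch1 m = ∑ n ∈ range (m + 1), (-1 : ℚ)^(m - n) * (m.factorial : ℚ) / (n.factorial : ℚ) * Chh1 n := by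
  induction m with
  | zero => simp [Ch1, Chh1]
  | succ m ih =>
    rw [Finset.sum_range_succ]
    have hstep : ∀ n ∈ range (m+1),
        (-1 : ℚ)^(m+1-n) * ((m+1).factorial : ℚ) / (n.factorial : ℚ) * Chh1 n
        = (-(m+1)) * ((-1 : ℚ)^(m-n) * (m.factorial : ℚ) / (n.factorial : ℚ) * Chh1 n) := by
      intro n hn
      simp only [mem_range] at hn
      have h1 : m + 1 - n = (m - n) + 1 := by omega
      rw [h1, pow_succ, Nat.factorial_succ]
      push_cast
      ring
    rw [Finset.sum_congr rfl hstep, ← Finset.mul_sum, ← ih, Chh1_succ]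
    simp only [Nat.sub_self, pow_zero, Ch1, Nat.factorial_succ]
    have h2 : ((m+1).factorial : ℚ) / ((m+1).factorial : ℚ) = 1 := by
      rw [div_self]; positivity
    push_cast
    field_simp
    ring
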